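/- For every α ∈ [0,1], either there exist a unique integer n ≥ 0 and unique finite sequences of integers b_1,…,b_n ≥ 2 and c_1,…,c_n ≥ 1 such that α ∈ A_n and α = [0;b_1,…,b_n] + [0;c_1,…,c_n], or there exist unique infinite sequences of integers b_1, b_2, … ≥ 2 and c_1, c_2, … ≥ 1 such that α ∈ A_n for every n ≥ 0. -/

import Mathlib

noncomputable section

namespace ShulgaPaper

open Filter Topology

/-- The value of the finite continued fraction `[0; a₁, …, aₙ]`
(the empty continued fraction has value `0`). -/
def cf : List ℕ → ℝ
  | [] => 0
  | a :: l => 1 / ((a : ℝ) + cf l)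

/-- Iterates of the Gauss map, starting from the fractional part of `x`. -/
def gaussIter (x : ℝ) : ℕ → ℝ
  | 0 => Int.fract x
  | n + 1 => Int.fract (1 / gaussIter x n)

/-- The `n`-th partial quotient `aₙ(x)` of the continued fraction expansion of `x`
(for `n ≥ 1`; a junk value is returned if it is undefined). -/
def pq (x : ℝ) (n : ℕ) : ℕ := ⌊1 / gaussIter x (n - 1)⌋₊

/-- The `n`-th partial quotient `aₙ(x)` of `x` is defined (`n ≥ 1`), i.e. `n` does not
exceed the length of the continued fraction expansion of `x`. -/
def pqDefined (x : ℝ) (n : ℕ) : Prop := gaussIter x (n - 1) ≠ 0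

/-- The set `G` of real numbers that are rational or whose partial quotients diverge. -/
def G : Set ℝ :=
  {x | (∃ q : ℚ, x = (q : ℝ)) ∨ Tendsto (fun n => pq x n) atTop atTop}

/-- The list of pairs `(b_k, c_k)`, `k = 1, …, n`, produced by (a totalized version of)
Shulga's algorithm applied to `α`. -/
def shulgaList (α : ℝ) : ℕ → List (ℕ × ℕ)
  | 0 => []
  | n + 1 =>
      let L := shulgaList α n
      let b := pq (α - cf (L.map Prod.snd)) (n + 1) + 1
      let c := pq (α - cf (L.map Prod.fst ++ [b])) (n + 1)
      L ++ [(b, c)]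

/-- The list `[b₁, …, bₙ]` of Shulga's algorithm applied to `α`. -/
def bList (α : ℝ) (n : ℕ) : List ℕ := (shulgaList α n).map Prod.fst

/-- The list `[c₁, …, cₙ]` of Shulga's algorithm applied to `α`. -/
def cList (α : ℝ) (n : ℕ) : List ℕ := (shulgaList α n).map Prod.snd

/-- `bₙ` of Shulga's algorithm applied to `α` (for `n ≥ 1`). -/
def shulgaB (α : ℝ) (n : ℕ) : ℕ := ((shulgaList α n).getLast?.getD (0, 0)).1

/-- `cₙ` of Shulga's algorithm applied to `α` (for `n ≥ 1`). -/
def shulgaC (α : ℝ) (n : ℕ) : ℕ := ((shulgaList α n).getLast?.getD (0, 0)).2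

/-- The first `n` steps of Shulga's algorithm applied to `α` are defined: for each step
`k + 1 ≤ n`, the partial quotients `a_{k+1}(α - [0;c₁,…,c_k])` and
`a_{k+1}(α - [0;b₁,…,b_{k+1}])` defining `b_{k+1}` and `c_{k+1}` exist
(in particular the algorithm has not stopped before step `n`). -/
def shulgaDefined (α : ℝ) (n : ℕ) : Prop :=
  ∀ k < n, pqDefined (α - cf (cList α k)) (k + 1) ∧
    pqDefined (α - cf (bList α (k + 1))) (k + 1)

/-- The half-open interval whose included endpoint is `x` and excluded endpoint is `y`,
the smaller one being the left endpoint. -/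
def hIco (x y : ℝ) : Set ℝ := if x ≤ y then Set.Ico x y else Set.Ioc y x

/-- The list `[a 1, …, a n]`. -/
def listOf (a : ℕ → ℕ) (n : ℕ) : List ℕ := (List.range n).map fun i => a (i + 1)

/-- The interval `B_k` determined by the digits `b`, `c` (`k ≥ 1`). -/
def Bset (b c : ℕ → ℕ) (k : ℕ) : Set ℝ :=
  hIco (cf (listOf b (k - 1) ++ [b k - 1]) + cf (listOf c (k - 1)))
    (cf (listOf b k) + cf (listOf c (k - 1)))

/-- The interval `C_k` determined by the digits `b`, `c` (`k ≥ 1`). -/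
def Cset (b c : ℕ → ℕ) (k : ℕ) : Set ℝ :=
  hIco (cf (listOf c k) + cf (listOf b k))
    (cf (listOf c (k - 1) ++ [c k + 1]) + cf (listOf b k))

/-- `A₀ = [0,1]` and `Aₙ = ⋂_{k=1}^{n} (B_k ∩ C_k)` for `n ≥ 1`. -/
def Aset (b c : ℕ → ℕ) : ℕ → Set ℝ
  | 0 => Set.Icc 0 1
  | n + 1 => ⋂ k ∈ Finset.Icc 1 (n + 1), (Bset b c k ∩ Cset b c k)

/-- The denominators of the convergents of `[0; a 1, a 2, …]`:
`q₀ = 1`, `q₁ = a 1`, `q_k = a k * q_{k-1} + q_{k-2}`. -/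
def qden (a : ℕ → ℕ) : ℕ → ℕ
  | 0 => 1
  | 1 => a 1
  | n + 2 => a (n + 2) * qden a (n + 1) + qden a n


/-- continuant matrix: ((q,q'),(p,p')) with cf l = p/q. -/
def cmat : List ℕ → (ℕ × ℕ) × (ℕ × ℕ)
  | [] => ((1, 0), (0, 1))
  | a :: l => ((a * (cmat l).1.1 + (cmat l).2.1, a * (cmat l).1.2 + (cmat l).2.2), (cmat l).1)

lemma cmat_q_pos : ∀ l : List ℕ, (∀ a ∈ l, 1 ≤ a) → 1 ≤ (cmat l).1.1
  | [], _ => le_refl 1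
  | a :: l, h => by
      have ha : 1 ≤ a := h a (List.mem_cons_self)
      have hq := cmat_q_pos l (fun x hx => h x (List.mem_cons_of_mem a hx))
      simp only [cmat]
      nlinarith

lemma cf_nonneg : ∀ l : List ℕ, (∀ a ∈ l, 1 ≤ a) → 0 ≤ cf l
  | [], _ => le_refl 0
  | a :: l, h => by
      have ha : 1 ≤ a := h a (List.mem_cons_self)
      have h0 := cf_nonneg l (fun x hx => h x (List.mem_cons_of_mem a hx))
      simp only [cf]
      positivity

lemma cf_eq : ∀ l : List ℕ, (∀ a ∈ l, 1 ≤ a) →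
    cf l = ((cmat l).2.1 : ℝ) / ((cmat l).1.1 : ℝ)
  | [], _ => by simp [cf, cmat]
  | a :: l, h => by
      have ha : 1 ≤ a := h a (List.mem_cons_self)
      have h' : ∀ x ∈ l, 1 ≤ x := fun x hx => h x (List.mem_cons_of_mem a hx)
      have hq : (1 : ℕ) ≤ (cmat l).1.1 := cmat_q_pos l h'
      have hq' : (0 : ℝ) < ((cmat l).1.1 : ℝ) := by exact_mod_cast hq
      have IH := cf_eq l h'
      have hden : (0:ℝ) < (a:ℝ) + ((cmat l).2.1 : ℝ) / ((cmat l).1.1 : ℝ) := by positivity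
      simp only [cf, cmat, IH]
      rw [div_eq_div_iff (by positivity) (by positivity)]
      push_cast
      field_simp

lemma cmat_snoc (l : List ℕ) (m : ℕ) :
    cmat (l ++ [m]) = ((m * (cmat l).1.1 + (cmat l).1.2, (cmat l).1.1),
      (m * (cmat l).2.1 + (cmat l).2.2, (cmat l).2.1)) := by
  induction l with
  | nil => simp [cmat]
  | cons a l ih =>
      rw [List.cons_append]
      simp only [cmat, ih, Prod.mk.injEq]
      refine ⟨⟨by ring, trivial⟩, trivial⟩

lemma cmat_det : ∀ l : List ℕ,
    ((cmat l).1.1 : ℤ) * (cmat l).2.2 - (cmat l).1.2 * (cmat l).2.1 = (-1) ^ l.length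
  | [] => by simp [cmat]
  | a :: l => by
      have ih := cmat_det l
      simp only [cmat, List.length_cons, pow_succ]
      push_cast
      nlinarith [ih]


def dl (P P' m : ℕ) : ℝ := 1 / ((P : ℝ) * (m * P + P'))

lemma denom_pos {P P' m : ℕ} (hP : 1 ≤ P) (hm : 1 ≤ m) :
    (0:ℝ) < (P:ℝ) * ((m:ℝ) * P + P') := by
  have a1 : (1:ℝ) ≤ (P:ℝ) := by exact_mod_cast hP
  have a2 : (1:ℝ) ≤ (m:ℝ) := by exact_mod_cast hm
  have a3 : (0:ℝ) ≤ (P':ℝ) := Nat.cast_nonneg P'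
  have h1 : (0:ℝ) < (m:ℝ) * P := mul_pos (by linarith) (by linarith)
  have h2 : (0:ℝ) < (m:ℝ) * P + P' := by linarith
  exact mul_pos (by linarith) h2

lemma dl_eq (P P' m : ℕ) : dl P P' m = 1 / ((P:ℝ) * ((m:ℝ) * P + P')) := rfl

lemma dl_pos {P P' m : ℕ} (hP : 1 ≤ P) (hm : 1 ≤ m) : 0 < dl P P' m := by
  rw [dl_eq]
  exact one_div_pos.mpr (denom_pos hP hm)

lemma dl_anti {P P' : ℕ} (hP : 1 ≤ P) {m m' : ℕ} (hm : 1 ≤ m) (h : m ≤ m') :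
    dl P P' m' ≤ dl P P' m := by
  have hm' : 1 ≤ m' := le_trans hm h
  rw [dl_eq, dl_eq]
  apply one_div_le_one_div_of_le (denom_pos hP hm)
  have h5 : (m:ℝ) ≤ (m':ℝ) := by exact_mod_cast h
  have a1 : (0:ℝ) < (P:ℝ) := by exact_mod_cast hP
  have : (m:ℝ) * P ≤ (m':ℝ) * P := by nlinarith
  nlinarith

lemma dl_strict_anti {P P' : ℕ} (hP : 1 ≤ P) {m m' : ℕ} (hm : 1 ≤ m) (h : m < m') :
    dl P P' m' < dl P P' m := by
  have hm' : 1 ≤ m' := by omega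
  rw [dl_eq, dl_eq]
  apply one_div_lt_one_div_of_lt (denom_pos hP hm)
  have h5 : (m:ℝ) < (m':ℝ) := by exact_mod_cast h
  have a1 : (0:ℝ) < (P:ℝ) := by exact_mod_cast hP
  have : (m:ℝ) * P < (m':ℝ) * P := by nlinarith
  nlinarith

lemma dl_state_mono {P P' u u' m : ℕ} (hP : 1 ≤ P) (hm : 1 ≤ m)
    (h1 : P ≤ u) (h2 : P' ≤ u') : dl u u' m ≤ dl P P' m := by
  rw [dl_eq, dl_eq]
  apply one_div_le_one_div_of_le (denom_pos hP hm)
  have c1 : (P:ℝ) ≤ u := by exact_mod_cast h1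
  have c2 : (P':ℝ) ≤ u' := by exact_mod_cast h2
  have a1 : (1:ℝ) ≤ (P:ℝ) := by exact_mod_cast hP
  have a2 : (1:ℝ) ≤ (m:ℝ) := by exact_mod_cast hm
  have a3 : (0:ℝ) ≤ (P':ℝ) := Nat.cast_nonneg P'
  have h5 : (m:ℝ) * P + P' ≤ (m:ℝ) * u + u' := by nlinarith
  have h6 : (0:ℝ) ≤ (m:ℝ) * P + P' := by nlinarith
  exact mul_le_mul c1 h5 h6 (by linarith)

lemma dl_diff {u u' c : ℕ} (hu : 1 ≤ u) (hc : 1 ≤ c) :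
    dl u u' c - dl u u' (c + 1) = dl (c * u + u') u 1 := by
  have a4 : (1:ℝ) ≤ (u:ℝ) := by exact_mod_cast hu
  have a5 : (1:ℝ) ≤ (c:ℝ) := by exact_mod_cast hc
  have a6 : (0:ℝ) ≤ (u':ℝ) := Nat.cast_nonneg u'
  have hcu : (0:ℝ) < (c:ℝ) * u := mul_pos (by linarith) (by linarith)
  have hX : ((u:ℝ) * ((c:ℝ) * u + u')) ≠ 0 := ne_of_gt (mul_pos (by linarith) (by linarith))
  have hY : ((u:ℝ) * (((c:ℝ) + 1) * u + u')) ≠ 0 := ne_of_gt (mul_pos (by linarith) (by nlinarith))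
  have hZ : (((c:ℝ) * u + u') * (1 * ((c:ℝ) * u + u') + u)) ≠ 0 :=
    ne_of_gt (mul_pos (by linarith) (by nlinarith))
  rw [dl_eq, dl_eq, dl_eq]
  push_cast
  field_simp
  ring

lemma dl_diffB {P P' b : ℕ} (hP : 1 ≤ P) (hb : 2 ≤ b) :
    dl P P' (b - 1) - dl P P' b
      = 1 / (((b:ℝ) * P + P' - P) * ((b:ℝ) * P + P')) := by
  have hb1 : ((b - 1 : ℕ) : ℝ) = (b:ℝ) - 1 := by
    have : (1:ℕ) ≤ b := by omega
    push_cast [this]; ring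
  have a1 : (1:ℝ) ≤ (P:ℝ) := by exact_mod_cast hP
  have a2 : (2:ℝ) ≤ (b:ℝ) := by exact_mod_cast hb
  have a3 : (0:ℝ) ≤ (P':ℝ) := Nat.cast_nonneg P'
  have hb2 : (0:ℝ) < ((b:ℝ) - 1) * P := mul_pos (by linarith) (by linarith)
  have hb3 : (0:ℝ) < (b:ℝ) * P := mul_pos (by linarith) (by linarith)
  have h1 : (0:ℝ) < (P:ℝ) * (((b:ℝ) - 1) * P + P') := mul_pos (by linarith) (by linarith)
  have h2 : (0:ℝ) < (P:ℝ) * ((b:ℝ) * P + P') := mul_pos (by linarith) (by linarith)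
  have h3 : (0:ℝ) < ((b:ℝ) * P + P' - P) * ((b:ℝ) * P + P') := mul_pos (by nlinarith) (by linarith)
  rw [dl_eq, dl_eq, hb1]
  rw [div_sub_div _ _ (ne_of_gt h1) (ne_of_gt h2), div_eq_div_iff (ne_of_gt (by nlinarith)) (ne_of_gt h3)]
  ring

lemma key_round {P P' u u' b c : ℕ} (hP : 1 ≤ P) (hu : 1 ≤ u)
    (huP : P ≤ u) (huP' : P' ≤ u') (hb : 2 ≤ b) (hc : 1 ≤ c) {D d : ℝ}
    (hd : d = D - dl P P' b)
    (h2 : D ≤ dl P P' (b - 1))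
    (h3 : dl u u' (c + 1) < d) (h4 : d ≤ dl u u' c)
    (hE : D ≤ dl u u' 1) :
    b * P + P' ≤ c * u + u' := by
  have a1 : (1:ℝ) ≤ (P:ℝ) := by exact_mod_cast hP
  have a2 : (2:ℝ) ≤ (b:ℝ) := by exact_mod_cast hb
  have a3 : (0:ℝ) ≤ (P':ℝ) := Nat.cast_nonneg P'
  have a4 : (1:ℝ) ≤ (u:ℝ) := by exact_mod_cast hu
  have a5 : (1:ℝ) ≤ (c:ℝ) := by exact_mod_cast hc
  have a6 : (0:ℝ) ≤ (u':ℝ) := Nat.cast_nonneg u'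
  have a7 : (P:ℝ) ≤ u := by exact_mod_cast huP
  have a8 : (P':ℝ) ≤ u' := by exact_mod_cast huP'
  -- positive quantities
  have hb3 : (0:ℝ) < (b:ℝ) * P := mul_pos (by linarith) (by linarith)
  have hb4 : (P:ℝ) ≤ ((b:ℝ) - 1) * P := by nlinarith
  have hc3 : (0:ℝ) < (c:ℝ) * u := mul_pos (by linarith) (by linarith)
  have hQ : (0:ℝ) < (b:ℝ) * P + P' := by linarith
  have hR : (0:ℝ) < (b:ℝ) * P + P' - P := by nlinarith
  have hU : (0:ℝ) < (c:ℝ) * u + u' := by linarith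
  have hUu : (0:ℝ) < (c:ℝ) * u + u' + u := by linarith
  -- rewrite the dl's
  have ecl : dl u u' (c+1) = 1 / ((u:ℝ) * (((c:ℝ) * u + u') + u)) := by
    rw [dl_eq]; push_cast; ring_nf
  have ec : dl u u' c = 1 / ((u:ℝ) * ((c:ℝ) * u + u')) := by
    rw [dl_eq]
  have e1 : dl u u' 1 = 1 / ((u:ℝ) * ((u:ℝ) + u')) := by
    rw [dl_eq]; push_cast; ring_nf
  have eb : dl P P' b = 1 / ((P:ℝ) * ((b:ℝ) * P + P')) := by rw [dl_eq]
  -- (A') : (Q - P) * Q < u * (U + u)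
  have hA : ((b:ℝ) * P + P' - P) * ((b:ℝ) * P + P') < (u:ℝ) * (((c:ℝ) * u + u') + u) := by
    have hdB : d ≤ 1 / (((b:ℝ) * P + P' - P) * ((b:ℝ) * P + P')) := by
      have hdiff := dl_diffB (P' := P') hP hb
      rw [hd]
      linarith [hdiff]
    have h5 : 1 / ((u:ℝ) * (((c:ℝ) * u + u') + u)) < 1 / (((b:ℝ) * P + P' - P) * ((b:ℝ) * P + P')) := by
      rw [← ecl]; linarith
    exact (one_div_lt_one_div (mul_pos (by linarith) hUu) (mul_pos hR hQ)).mp h5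
  -- (B') : u * (U + u) < c * (P * Q)   (via (u+u')(U+u) < c P Q)
  have hB : ((u:ℝ) + u') * (((c:ℝ) * u + u') + u) < (c:ℝ) * ((P:ℝ) * ((b:ℝ) * P + P')) := by
    have h6 : 1 / ((u:ℝ) * (((c:ℝ) * u + u') + u)) + 1 / ((P:ℝ) * ((b:ℝ) * P + P'))
        < 1 / ((u:ℝ) * ((u:ℝ) + u')) := by
      rw [← ecl, ← eb, ← e1]
      have := hd ▸ h3
      linarith
    have hx : (0:ℝ) < (u:ℝ) * (((c:ℝ) * u + u') + u) := mul_pos (by linarith) hUu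
    have hy : (0:ℝ) < (P:ℝ) * ((b:ℝ) * P + P') := mul_pos (by linarith) hQ
    have hz : (0:ℝ) < (u:ℝ) * ((u:ℝ) + u') := mul_pos (by linarith) (by linarith)
    have hw : (0:ℝ) < ((u:ℝ) + u') * (((c:ℝ) * u + u') + u) := mul_pos (by linarith) hUu
    have hid : 1 / ((u:ℝ) * ((u:ℝ) + u')) - 1 / ((u:ℝ) * (((c:ℝ) * u + u') + u))
        = (c:ℝ) / (((u:ℝ) + u') * (((c:ℝ) * u + u') + u)) := by
      rw [div_sub_div _ _ (ne_of_gt hz) (ne_of_gt hx),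
        div_eq_div_iff (ne_of_gt (mul_pos hz hx)) (ne_of_gt hw)]
      ring
    have h7 : 1 / ((P:ℝ) * ((b:ℝ) * P + P'))
        < (c:ℝ) / (((u:ℝ) + u') * (((c:ℝ) * u + u') + u)) := by linarith
    have h8 := (div_lt_div_iff₀ hy hw).mp h7
    linarith [h8]
  -- combine:  Q * Q < (c+1) * P * Q,  so  Q < (c+1) * P
  have huu'2 : (u:ℝ) * (((c:ℝ) * u + u') + u) ≤ ((u:ℝ) + u') * (((c:ℝ) * u + u') + u) :=
    mul_le_mul_of_nonneg_right (by linarith) (le_of_lt hUu)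
  have e : ((b:ℝ) * P + P') * ((b:ℝ) * P + P')
      = ((b:ℝ) * P + P' - P) * ((b:ℝ) * P + P') + (P:ℝ) * ((b:ℝ) * P + P') := by ring
  have hQQ : ((b:ℝ) * P + P') * ((b:ℝ) * P + P') < (((c:ℝ) + 1) * P) * ((b:ℝ) * P + P') := by
    have e2 : (((c:ℝ) + 1) * P) * ((b:ℝ) * P + P')
        = (c:ℝ) * ((P:ℝ) * ((b:ℝ) * P + P')) + (P:ℝ) * ((b:ℝ) * P + P') := by ring
    rw [e, e2]
    have := lt_of_lt_of_le hA huu'2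
    linarith [this, hB]
  have hQP : ((b:ℝ) * P + P') < ((c:ℝ) + 1) * P :=
    lt_of_mul_lt_mul_right hQQ (le_of_lt hQ)
  have hbc : b ≤ c := by
    have hbP : ((b:ℝ)) * P < (((c:ℝ) + 1)) * P := by linarith
    have h9 : (b:ℝ) < (c:ℝ) + 1 := lt_of_mul_lt_mul_right hbP (by linarith)
    have : b < c + 1 := by exact_mod_cast h9
    omega
  have : b * P ≤ c * u := Nat.mul_le_mul hbc huP
  omega


lemma listOf_zero (a : ℕ → ℕ) : listOf a 0 = [] := by simp [listOf]

lemma listOf_succ (a : ℕ → ℕ) (k : ℕ) : listOf a (k + 1) = listOf a k ++ [a (k + 1)] := by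
  simp [listOf, List.range_succ]

lemma listOf_length (a : ℕ → ℕ) (k : ℕ) : (listOf a k).length = k := by simp [listOf]

lemma listOf_mem {a : ℕ → ℕ} {k : ℕ} (h : ∀ j, 1 ≤ j → j ≤ k → 1 ≤ a j) :
    ∀ x ∈ listOf a k, 1 ≤ x := by
  intro x hx
  simp only [listOf, List.mem_map, List.mem_range] at hx
  obtain ⟨i, hi, rfl⟩ := hx
  exact h (i + 1) (by omega) (by omega)

lemma listOf_congr {a a' : ℕ → ℕ} {k : ℕ} (h : ∀ j, 1 ≤ j → j ≤ k → a j = a' j) :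
    listOf a k = listOf a' k := by
  simp only [listOf]
  apply List.map_congr_left
  intro i hi
  simp only [List.mem_range] at hi
  exact h (i + 1) (by omega) (by omega)

lemma cf_snoc (l : List ℕ) (hl : ∀ x ∈ l, 1 ≤ x) (m : ℕ) (hm : 1 ≤ m) :
    cf (l ++ [m]) = cf l + (-1) ^ l.length * dl (cmat l).1.1 (cmat l).1.2 m := by
  have hl' : ∀ x ∈ l ++ [m], 1 ≤ x := by
    intro x hx
    rcases List.mem_append.mp hx with h | h
    · exact hl x h
    · simp at h; omega
  have hq : 1 ≤ (cmat l).1.1 := cmat_q_pos l hl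
  have hq' : (0:ℝ) < ((cmat l).1.1 : ℝ) := by exact_mod_cast hq
  have hden : (0:ℝ) < (m:ℝ) * (cmat l).1.1 + (cmat l).1.2 := by
    have : (1:ℝ) ≤ (m:ℝ) := by exact_mod_cast hm
    have : (0:ℝ) ≤ ((cmat l).1.2 : ℝ) := by positivity
    nlinarith
  have hdet : (((cmat l).1.1 : ℝ) * (cmat l).2.2 - (cmat l).1.2 * (cmat l).2.1)
      = (-1) ^ l.length := by exact_mod_cast cmat_det l
  rw [cf_eq _ hl', cf_eq _ hl, cmat_snoc]
  unfold dl
  push_cast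
  field_simp
  linear_combination hdet

lemma mem_hIco_eps {t u v x ε : ℝ} (hε : ε = 1 ∨ ε = -1) (huv : v < u) :
    x ∈ hIco (t + ε * u) (t + ε * v) ↔ v < ε * (x - t) ∧ ε * (x - t) ≤ u := by
  rcases hε with rfl | rfl
  · have : ¬ (t + 1 * u ≤ t + 1 * v) := by nlinarith
    simp only [hIco, if_neg this, Set.mem_Ioc]
    constructor <;> intro h <;> constructor <;> nlinarith [h.1, h.2]
  · have : t + (-1) * u ≤ t + (-1) * v := by nlinarith
    simp only [hIco, if_pos this, Set.mem_Ico]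
    constructor <;> intro h <;> constructor <;> nlinarith [h.1, h.2]


lemma neg_one_pow_cases (k : ℕ) : ((-1 : ℝ)) ^ k = 1 ∨ ((-1 : ℝ)) ^ k = -1 := by
  rcases Nat.even_or_odd k with h | h
  · left; exact h.neg_one_pow
  · right; exact h.neg_one_pow

lemma mem_Bset_iff {b c : ℕ → ℕ} {k : ℕ} (hb : ∀ j, 1 ≤ j → j ≤ k → 1 ≤ b j)
    (hbk : 2 ≤ b (k + 1)) (α : ℝ) :
    α ∈ Bset b c (k + 1) ↔
      dl (cmat (listOf b k)).1.1 (cmat (listOf b k)).1.2 (b (k + 1)) <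
          (-1) ^ k * (α - cf (listOf b k) - cf (listOf c k)) ∧
        (-1) ^ k * (α - cf (listOf b k) - cf (listOf c k)) ≤
          dl (cmat (listOf b k)).1.1 (cmat (listOf b k)).1.2 (b (k + 1) - 1) := by
  have hlb := listOf_mem hb
  have hq := cmat_q_pos _ hlb
  have e1 : cf (listOf b k ++ [b (k + 1) - 1]) + cf (listOf c k)
      = (cf (listOf b k) + cf (listOf c k)) +
        (-1) ^ k * dl (cmat (listOf b k)).1.1 (cmat (listOf b k)).1.2 (b (k + 1) - 1) := by
    rw [cf_snoc _ hlb _ (by omega), listOf_length]; ring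
  have e2 : cf (listOf b (k + 1)) + cf (listOf c k)
      = (cf (listOf b k) + cf (listOf c k)) +
        (-1) ^ k * dl (cmat (listOf b k)).1.1 (cmat (listOf b k)).1.2 (b (k + 1)) := by
    rw [listOf_succ, cf_snoc _ hlb _ (by omega), listOf_length]; ring
  have hBk : Bset b c (k + 1) = hIco
      (cf (listOf b k ++ [b (k + 1) - 1]) + cf (listOf c k))
      (cf (listOf b (k + 1)) + cf (listOf c k)) := by
    simp [Bset]
  rw [hBk, e1, e2,
    mem_hIco_eps (neg_one_pow_cases k) (dl_strict_anti hq (by omega) (by omega))]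
  constructor
  · rintro ⟨h1, h2⟩; exact ⟨by linarith [h1], by linarith [h2]⟩
  · rintro ⟨h1, h2⟩; exact ⟨by linarith [h1], by linarith [h2]⟩

lemma mem_Cset_iff {b c : ℕ → ℕ} {k : ℕ} (hc : ∀ j, 1 ≤ j → j ≤ k → 1 ≤ c j)
    (hck : 1 ≤ c (k + 1)) (α : ℝ) :
    α ∈ Cset b c (k + 1) ↔
      dl (cmat (listOf c k)).1.1 (cmat (listOf c k)).1.2 (c (k + 1) + 1) <
          (-1) ^ k * (α - cf (listOf b (k + 1)) - cf (listOf c k)) ∧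
        (-1) ^ k * (α - cf (listOf b (k + 1)) - cf (listOf c k)) ≤
          dl (cmat (listOf c k)).1.1 (cmat (listOf c k)).1.2 (c (k + 1)) := by
  have hlc := listOf_mem hc
  have hq := cmat_q_pos _ hlc
  have e1 : cf (listOf c (k + 1)) + cf (listOf b (k + 1))
      = (cf (listOf c k) + cf (listOf b (k + 1))) +
        (-1) ^ k * dl (cmat (listOf c k)).1.1 (cmat (listOf c k)).1.2 (c (k + 1)) := by
    rw [listOf_succ, cf_snoc _ hlc _ (by omega), listOf_length]; ring
  have e2 : cf (listOf c k ++ [c (k + 1) + 1]) + cf (listOf b (k + 1))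
      = (cf (listOf c k) + cf (listOf b (k + 1))) +
        (-1) ^ k * dl (cmat (listOf c k)).1.1 (cmat (listOf c k)).1.2 (c (k + 1) + 1) := by
    rw [cf_snoc _ hlc _ (by omega), listOf_length]; ring
  have hCk : Cset b c (k + 1) = hIco
      (cf (listOf c (k + 1)) + cf (listOf b (k + 1)))
      (cf (listOf c k ++ [c (k + 1) + 1]) + cf (listOf b (k + 1))) := by
    simp [Cset]
  rw [hCk, e1, e2,
    mem_hIco_eps (neg_one_pow_cases k) (dl_strict_anti hq (by omega) (by omega))]
  constructor
  · rintro ⟨h1, h2⟩; exact ⟨by linarith [h1], by linarith [h2]⟩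
  · rintro ⟨h1, h2⟩; exact ⟨by linarith [h1], by linarith [h2]⟩

lemma mem_Aset_succ_iff (b c : ℕ → ℕ) (n : ℕ) (α : ℝ) :
    α ∈ Aset b c (n + 1) ↔ ∀ k, 1 ≤ k → k ≤ n + 1 → α ∈ Bset b c k ∧ α ∈ Cset b c k := by
  simp [Aset, Set.mem_iInter, Finset.mem_Icc, and_imp]

lemma mem_Aset_elim {b c : ℕ → ℕ} {n : ℕ} {α : ℝ} (h : α ∈ Aset b c n) :
    ∀ k, 1 ≤ k → k ≤ n → α ∈ Bset b c k ∧ α ∈ Cset b c k := by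
  cases n with
  | zero => intro k h1 h2; omega
  | succ m => exact (mem_Aset_succ_iff b c m α).mp h


/-- the chosen digit `b`:  least `m ≥ 2` with `dl P P' m < D`. -/
def pickB (P P' : ℕ) (D : ℝ) : ℕ := sInf {m : ℕ | dl P P' (m + 2) < D} + 2

/-- the chosen digit `c`. -/
def pickC (u u' : ℕ) (d : ℝ) : ℕ := sInf {m : ℕ | dl u u' (m + 2) < d} + 1

lemma pick_nonempty {P P' : ℕ} (hP : 1 ≤ P) {D : ℝ} (hD : 0 < D) :
    {m : ℕ | dl P P' (m + 2) < D}.Nonempty := by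
  obtain ⟨n, hn⟩ := exists_nat_gt (1 / D)
  refine ⟨n, ?_⟩
  have h0 : (0:ℝ) < 1 / D := by positivity
  have hP' : (1:ℝ) ≤ (P:ℝ) := by exact_mod_cast hP
  have hPn : (0:ℝ) ≤ (P':ℝ) := Nat.cast_nonneg _
  have hden : 1 / D < (P:ℝ) * (((n+2 : ℕ):ℝ) * P + P') := by
    have : ((n:ℝ)) ≤ ((n+2 : ℕ):ℝ) := by push_cast; linarith
    have h2 : ((n+2 : ℕ):ℝ) ≤ ((n+2 : ℕ):ℝ) * P := le_mul_of_one_le_right (by positivity) hP'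
    have h3 : ((n+2 : ℕ):ℝ) * P ≤ (P:ℝ) * (((n+2 : ℕ):ℝ) * P + P') := by
      nlinarith [mul_nonneg (show (0:ℝ) ≤ ((n+2:ℕ):ℝ) by positivity) (show (0:ℝ) ≤ (P:ℝ) by linarith)]
    linarith
  show dl P P' (n + 2) < D
  rw [dl_eq]
  have h9 := (div_lt_iff₀ hD).mp hden
  rw [div_lt_iff₀ (by nlinarith [h9, hD])]
  linarith [h9]

lemma pickB_spec {P P' u u' : ℕ} (hP : 1 ≤ P) (hu : 1 ≤ u) {D : ℝ} (hD : 0 < D)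
    (huP : P ≤ u) (huP' : P' ≤ u') (hE : D ≤ dl u u' 1) :
    2 ≤ pickB P P' D ∧ dl P P' (pickB P P' D) < D ∧ D ≤ dl P P' (pickB P P' D - 1) := by
  have hne := pick_nonempty hP (P' := P') hD
  have hmem := Nat.sInf_mem hne
  refine ⟨by unfold pickB; omega, hmem, ?_⟩
  rcases Nat.eq_zero_or_pos (sInf {m : ℕ | dl P P' (m + 2) < D}) with h0 | h0
  · -- pickB = 2 : use D ≤ dl u u' 1 ≤ dl P P' 1
    have : pickB P P' D - 1 = 1 := by unfold pickB; omega
    rw [this]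
    have hmono : dl u u' 1 ≤ dl P P' 1 := by
      have a1 : (1:ℝ) ≤ (P:ℝ) := by exact_mod_cast hP
      have a3 : (0:ℝ) ≤ (P':ℝ) := Nat.cast_nonneg _
      have c1 : (P:ℝ) ≤ u := by exact_mod_cast huP
      have c2 : (P':ℝ) ≤ u' := by exact_mod_cast huP'
      have m0 : (0:ℝ) < (P:ℝ) * P := mul_pos (by linarith) (by linarith)
      have m1 : (P:ℝ) * P ≤ (u:ℝ) * u := mul_le_mul c1 c1 (by linarith) (by linarith)
      have m2 : (P:ℝ) * P' ≤ (u:ℝ) * u' := mul_le_mul c1 c2 (by linarith) (by linarith)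
      rw [dl_eq, dl_eq]
      apply one_div_le_one_div_of_le
      · push_cast; nlinarith
      · push_cast; nlinarith
    exact le_trans hE hmono
  · -- minimality
    have hlt : sInf {m : ℕ | dl P P' (m + 2) < D} - 1 ∉ {m : ℕ | dl P P' (m + 2) < D} :=
      Nat.notMem_of_lt_sInf (by omega)
    have : ¬ (dl P P' (sInf {m : ℕ | dl P P' (m + 2) < D} - 1 + 2) < D) := hlt
    have heq : sInf {m : ℕ | dl P P' (m + 2) < D} - 1 + 2 = pickB P P' D - 1 := by
      unfold pickB; omega
    rw [heq] at this
    linarith [this]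

lemma pickC_spec {u u' : ℕ} (hu : 1 ≤ u) {d : ℝ} (hd : 0 < d) (hE : d ≤ dl u u' 1) :
    1 ≤ pickC u u' d ∧ dl u u' (pickC u u' d + 1) < d ∧ d ≤ dl u u' (pickC u u' d) := by
  have hne := pick_nonempty hu (P' := u') hd
  have hmem := Nat.sInf_mem hne
  have hm2 : pickC u u' d + 1 = sInf {m : ℕ | dl u u' (m + 2) < d} + 2 := by unfold pickC; omega
  refine ⟨by omega, by rw [hm2]; exact hmem, ?_⟩
  rcases Nat.eq_zero_or_pos (sInf {m : ℕ | dl u u' (m + 2) < d}) with h0 | h0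
  · have : pickC u u' d = 1 := by unfold pickC; omega
    rw [this]; exact hE
  · have hlt : sInf {m : ℕ | dl u u' (m + 2) < d} - 1 ∉ {m : ℕ | dl u u' (m + 2) < d} :=
      Nat.notMem_of_lt_sInf (by omega)
    have : ¬ (dl u u' (sInf {m : ℕ | dl u u' (m + 2) < d} - 1 + 2) < d) := hlt
    have heq : sInf {m : ℕ | dl u u' (m + 2) < d} - 1 + 2 = pickC u u' d := by
      unfold pickC; omega
    rw [heq] at this
    linarith [this]


structure St where
  D : ℝ
  P : ℕ
  P' : ℕ
  u : ℕ
  u' : ℕ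

def stepSt (s : St) : St :=
  ⟨dl s.u s.u' (pickC s.u s.u' (s.D - dl s.P s.P' (pickB s.P s.P' s.D)))
      - (s.D - dl s.P s.P' (pickB s.P s.P' s.D)),
    pickB s.P s.P' s.D * s.P + s.P', s.P,
    pickC s.u s.u' (s.D - dl s.P s.P' (pickB s.P s.P' s.D)) * s.u + s.u', s.u⟩

def sts (α : ℝ) : ℕ → St
  | 0 => ⟨α, 1, 0, 1, 0⟩
  | k + 1 => stepSt (sts α k)

def bdig (α : ℝ) (k : ℕ) : ℕ := pickB (sts α (k - 1)).P (sts α (k - 1)).P' (sts α (k - 1)).D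
def cdig (α : ℝ) (k : ℕ) : ℕ :=
  pickC (sts α (k - 1)).u (sts α (k - 1)).u'
    ((sts α (k - 1)).D - dl (sts α (k - 1)).P (sts α (k - 1)).P' (bdig α k))

lemma bdig_succ (α : ℝ) (k : ℕ) :
    bdig α (k + 1) = pickB (sts α k).P (sts α k).P' (sts α k).D := rfl
lemma cdig_succ (α : ℝ) (k : ℕ) :
    cdig α (k + 1) = pickC (sts α k).u (sts α k).u'
      ((sts α k).D - dl (sts α k).P (sts α k).P' (bdig α (k + 1))) := rfl
lemma sts_succ_D (α : ℝ) (k : ℕ) :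
    (sts α (k + 1)).D = dl (sts α k).u (sts α k).u' (cdig α (k + 1))
      - ((sts α k).D - dl (sts α k).P (sts α k).P' (bdig α (k + 1))) := rfl
lemma sts_succ_P (α : ℝ) (k : ℕ) :
    (sts α (k + 1)).P = bdig α (k + 1) * (sts α k).P + (sts α k).P' := rfl
lemma sts_succ_P' (α : ℝ) (k : ℕ) : (sts α (k + 1)).P' = (sts α k).P := rfl
lemma sts_succ_u (α : ℝ) (k : ℕ) :
    (sts α (k + 1)).u = cdig α (k + 1) * (sts α k).u + (sts α k).u' := rfl
lemma sts_succ_u' (α : ℝ) (k : ℕ) : (sts α (k + 1)).u' = (sts α k).u := rfl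

def Inv (α : ℝ) (k : ℕ) : Prop :=
  (sts α k).P = (cmat (listOf (bdig α) k)).1.1 ∧
  (sts α k).P' = (cmat (listOf (bdig α) k)).1.2 ∧
  (sts α k).u = (cmat (listOf (cdig α) k)).1.1 ∧
  (sts α k).u' = (cmat (listOf (cdig α) k)).1.2 ∧
  (sts α k).D = (-1) ^ k * (α - cf (listOf (bdig α) k) - cf (listOf (cdig α) k)) ∧
  0 ≤ (sts α k).D ∧
  (sts α k).D ≤ dl (sts α k).u (sts α k).u' 1 ∧
  1 ≤ (sts α k).P ∧ (sts α k).P ≤ (sts α k).u ∧ (sts α k).P' ≤ (sts α k).u' ∧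
  (∀ j, 1 ≤ j → j ≤ k → 2 ≤ bdig α j ∧ 1 ≤ cdig α j) ∧
  (∀ j, 1 ≤ j → j ≤ k → α ∈ Bset (bdig α) (cdig α) j ∧ α ∈ Cset (bdig α) (cdig α) j)

theorem invariant (α : ℝ) (h0 : 0 ≤ α) (h1 : α ≤ 1) :
    ∀ k, (∀ j, j < k → (sts α j).D ≠ 0) → Inv α k := by
  intro k
  induction k with
  | zero =>
      intro _
      have hl : listOf (bdig α) 0 = [] := by simp [listOf]
      have hl' : listOf (cdig α) 0 = [] := by simp [listOf]
      refine ⟨by simp [sts, hl, cmat], by simp [sts, hl, cmat], by simp [sts, hl', cmat],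
        by simp [sts, hl', cmat], by simp [sts, hl, hl', cf], by simpa [sts] using h0, ?_,
        by simp [sts], by simp [sts], by simp [sts], by omega, by omega⟩
      show α ≤ dl 1 0 1
      rw [dl_eq]
      norm_num
      exact h1
  | succ k ih =>
      intro hD
      have hIH := ih (fun j hj => hD j (by omega))
      obtain ⟨hP1, hP2, hu1, hu2, hDk, hD0, hE, hPpos, hPu, hP'u', hdig, hmem⟩ := hIH
      have hupos : 1 ≤ (sts α k).u := le_trans hPpos hPu
      have hDne := hD k (by omega)
      have hDpos : 0 < (sts α k).D := lt_of_le_of_ne hD0 (Ne.symm hDne)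
      -- digits at k+1
      obtain ⟨hb2, hblt, hbge⟩ := pickB_spec hPpos hupos hDpos hPu hP'u' hE
      rw [← bdig_succ] at hb2 hblt hbge
      have hdpos : 0 < (sts α k).D - dl (sts α k).P (sts α k).P' (bdig α (k+1)) := by
        linarith [hblt]
      have hdlb_pos : 0 < dl (sts α k).P (sts α k).P' (bdig α (k+1)) :=
        dl_pos hPpos (by omega)
      have hdE : (sts α k).D - dl (sts α k).P (sts α k).P' (bdig α (k+1))
          ≤ dl (sts α k).u (sts α k).u' 1 := by linarith
      obtain ⟨hc1, hclt, hcge⟩ := pickC_spec hupos hdpos hdE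
      rw [← cdig_succ] at hc1 hclt hcge
      -- validity of digit lists
      have hbval : ∀ j, 1 ≤ j → j ≤ k → 1 ≤ bdig α j := fun j a b => by
        have := (hdig j a b).1; omega
      have hcval : ∀ j, 1 ≤ j → j ≤ k → 1 ≤ cdig α j := fun j a b => (hdig j a b).2
      have hlb := listOf_mem hbval
      have hlc := listOf_mem hcval
      -- continuant updates
      have hP1' : (sts α (k+1)).P = (cmat (listOf (bdig α) (k+1))).1.1 := by
        rw [listOf_succ, cmat_snoc, sts_succ_P, hP1, hP2]
      have hP2' : (sts α (k+1)).P' = (cmat (listOf (bdig α) (k+1))).1.2 := by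
        rw [listOf_succ, cmat_snoc, sts_succ_P', hP1]
      have hu1' : (sts α (k+1)).u = (cmat (listOf (cdig α) (k+1))).1.1 := by
        rw [listOf_succ, cmat_snoc, sts_succ_u, hu1, hu2]
      have hu2' : (sts α (k+1)).u' = (cmat (listOf (cdig α) (k+1))).1.2 := by
        rw [listOf_succ, cmat_snoc, sts_succ_u', hu1]
      -- snoc formulas for cf
      have hsnocb : cf (listOf (bdig α) (k+1)) = cf (listOf (bdig α) k)
          + (-1) ^ k * dl (sts α k).P (sts α k).P' (bdig α (k+1)) := by
        rw [listOf_succ, cf_snoc _ hlb _ (by omega), listOf_length, hP1, hP2]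
      have hsnocc : cf (listOf (cdig α) (k+1)) = cf (listOf (cdig α) k)
          + (-1) ^ k * dl (sts α k).u (sts α k).u' (cdig α (k+1)) := by
        rw [listOf_succ, cf_snoc _ hlc _ (by omega), listOf_length, hu1, hu2]
      have hsq : ((-1:ℝ)) ^ k * ((-1:ℝ)) ^ k = 1 := by
        rw [← pow_add]
        exact Even.neg_one_pow ⟨k, rfl⟩
      -- D recursion
      have hDk1 : (sts α (k+1)).D
          = (-1) ^ (k+1) * (α - cf (listOf (bdig α) (k+1)) - cf (listOf (cdig α) (k+1))) := by
        rw [sts_succ_D, hsnocb, hsnocc]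
        linear_combination (-1 : ℝ) * hDk + (-(dl (sts α k).P (sts α k).P' (bdig α (k+1)))
          - dl (sts α k).u (sts α k).u' (cdig α (k+1))) * hsq
      -- d as signed distance
      have hdq : (-1) ^ k * (α - cf (listOf (bdig α) (k+1)) - cf (listOf (cdig α) k))
          = (sts α k).D - dl (sts α k).P (sts α k).P' (bdig α (k+1)) := by
        rw [hsnocb]
        linear_combination (-1 : ℝ) * hDk - (dl (sts α k).P (sts α k).P' (bdig α (k+1))) * hsq
      refine ⟨hP1', hP2', hu1', hu2', hDk1, ?_, ?_, ?_, ?_, ?_, ?_, ?_⟩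
      · rw [sts_succ_D]; linarith
      · -- D' ≤ dl u_new u'_new 1
        rw [sts_succ_D, sts_succ_u, sts_succ_u']
        have := dl_diff hupos hc1 (u' := (sts α k).u')
        have h7 : dl (sts α k).u (sts α k).u' (cdig α (k+1))
            - ((sts α k).D - dl (sts α k).P (sts α k).P' (bdig α (k+1)))
            < dl (cdig α (k+1) * (sts α k).u + (sts α k).u') (sts α k).u 1 := by
          rw [← this]; linarith
        linarith
      · rw [sts_succ_P]
        have : 1 * 1 ≤ bdig α (k+1) * (sts α k).P := Nat.mul_le_mul (by omega) hPpos
        omega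
      · rw [sts_succ_P, sts_succ_u]
        exact key_round hPpos hupos hPu hP'u' hb2 hc1 rfl hbge hclt hcge hE
      · rw [sts_succ_P', sts_succ_u']; exact hPu
      · intro j hj1 hj2
        rcases Nat.lt_or_ge j (k+1) with h | h
        · exact hdig j hj1 (by omega)
        · have : j = k + 1 := by omega
          subst this
          exact ⟨hb2, hc1⟩
      · intro j hj1 hj2
        rcases Nat.lt_or_ge j (k+1) with h | h
        · exact hmem j hj1 (by omega)
        · have : j = k + 1 := by omega
          subst this
          constructor
          · rw [mem_Bset_iff hbval hb2 α]
            rw [← hP1, ← hP2, ← hDk]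
            exact ⟨hblt, hbge⟩
          · rw [mem_Cset_iff hcval hc1 α]
            rw [← hu1, ← hu2, hdq]
            exact ⟨hclt, hcge⟩


lemma digit_det {P P' : ℕ} (hP : 1 ≤ P) {x : ℝ} {m m' : ℕ} (hm : 2 ≤ m) (hm' : 2 ≤ m')
    (h1 : dl P P' m < x) (h2 : x ≤ dl P P' (m - 1))
    (h1' : dl P P' m' < x) (h2' : x ≤ dl P P' (m' - 1)) : m = m' := by
  by_contra hne
  rcases Nat.lt_or_ge m m' with h | h
  · have : dl P P' (m' - 1) ≤ dl P P' m := dl_anti hP (by omega) (by omega)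
    linarith
  · have : dl P P' (m - 1) ≤ dl P P' m' := dl_anti hP (by omega) (by omega)
    linarith

lemma digits_unique {α : ℝ} {b c b' c' : ℕ → ℕ} {N : ℕ}
    (hv : ∀ j, 1 ≤ j → j ≤ N → 2 ≤ b j ∧ 1 ≤ c j)
    (hv' : ∀ j, 1 ≤ j → j ≤ N → 2 ≤ b' j ∧ 1 ≤ c' j)
    (hm : ∀ j, 1 ≤ j → j ≤ N → α ∈ Bset b c j ∧ α ∈ Cset b c j)
    (hm' : ∀ j, 1 ≤ j → j ≤ N → α ∈ Bset b' c' j ∧ α ∈ Cset b' c' j) :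
    ∀ j, 1 ≤ j → j ≤ N → b j = b' j ∧ c j = c' j := by
  suffices H : ∀ n, n ≤ N → ∀ j, 1 ≤ j → j ≤ n → b j = b' j ∧ c j = c' j by
    intro j h1 h2; exact H N le_rfl j h1 h2
  intro n
  induction n with
  | zero => intro _ j h1 h2; omega
  | succ k ihk =>
      intro hkN j hj1 hj2
      have hpref : ∀ i, 1 ≤ i → i ≤ k → b i = b' i ∧ c i = c' i := ihk (by omega)
      rcases Nat.lt_or_ge j (k + 1) with h | h
      · exact hpref j hj1 (by omega)
      have hj : j = k + 1 := by omega
      subst hj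
      have hbval : ∀ i, 1 ≤ i → i ≤ k → 1 ≤ b i := fun i a hb => by
        have := (hv i a (by omega)).1; omega
      have hcval : ∀ i, 1 ≤ i → i ≤ k → 1 ≤ c i := fun i a hb => (hv i a (by omega)).2
      have hbval' : ∀ i, 1 ≤ i → i ≤ k → 1 ≤ b' i := fun i a hb => by
        have := (hv' i a (by omega)).1; omega
      have hcval' : ∀ i, 1 ≤ i → i ≤ k → 1 ≤ c' i := fun i a hb => (hv' i a (by omega)).2
      have hlbeq : listOf b k = listOf b' k := listOf_congr (fun i a hb => (hpref i a hb).1)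
      have hlceq : listOf c k = listOf c' k := listOf_congr (fun i a hb => (hpref i a hb).2)
      have hq : 1 ≤ (cmat (listOf b k)).1.1 := cmat_q_pos _ (listOf_mem hbval)
      have hqc : 1 ≤ (cmat (listOf c k)).1.1 := cmat_q_pos _ (listOf_mem hcval)
      have hB := (mem_Bset_iff hbval (hv (k+1) (by omega) (by omega)).1 α).mp
        (hm (k+1) (by omega) (by omega)).1
      have hB' := (mem_Bset_iff hbval' (hv' (k+1) (by omega) (by omega)).1 α).mp
        (hm' (k+1) (by omega) (by omega)).1
      rw [← hlbeq, ← hlceq] at hB'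
      have hbeq : b (k+1) = b' (k+1) :=
        digit_det hq (hv (k+1) (by omega) (by omega)).1 (hv' (k+1) (by omega) (by omega)).1
          hB.1 hB.2 hB'.1 hB'.2
      have hlbeq1 : listOf b (k+1) = listOf b' (k+1) := by
        rw [listOf_succ, listOf_succ, hlbeq, hbeq]
      have hC := (mem_Cset_iff hcval (hv (k+1) (by omega) (by omega)).2 α).mp
        (hm (k+1) (by omega) (by omega)).2
      have hC' := (mem_Cset_iff hcval' (hv' (k+1) (by omega) (by omega)).2 α).mp
        (hm' (k+1) (by omega) (by omega)).2
      rw [← hlceq, ← hlbeq1] at hC'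
      have hceq : c (k+1) + 1 = c' (k+1) + 1 := by
        refine digit_det (P' := (cmat (listOf c k)).1.2) hqc
          (by have := (hv (k+1) (by omega) (by omega)).2; omega)
          (by have := (hv' (k+1) (by omega) (by omega)).2; omega)
          hC.1 ?_ hC'.1 ?_
        · simpa using hC.2
        · simpa using hC'.2
      exact ⟨hbeq, by omega⟩

lemma not_terminal {α : ℝ} {b c : ℕ → ℕ} {k : ℕ} (hb : ∀ j, 1 ≤ j → j ≤ k → 1 ≤ b j)
    (hb2 : 2 ≤ b (k + 1)) (hB : α ∈ Bset b c (k + 1))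
    (hsum : α = cf (listOf b k) + cf (listOf c k)) : False := by
  have h := ((mem_Bset_iff hb hb2 α).mp hB).1
  have hq : 1 ≤ (cmat (listOf b k)).1.1 := cmat_q_pos _ (listOf_mem hb)
  have hdl := dl_pos (P' := (cmat (listOf b k)).1.2) hq (show 1 ≤ b (k+1) by omega)
  have hz : (-1:ℝ)^k * (cf (listOf b k) + cf (listOf c k)
      - cf (listOf b k) - cf (listOf c k)) = 0 := by ring
  rw [hsum, hz] at h
  linarith

/-- every `α ∈ [0,1]` admits either unique finite sequences with
`α ∈ Aₙ` and `α = [0;b₁,…,bₙ] + [0;c₁,…,cₙ]`, or unique infinite sequences with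
`α ∈ Aₙ` for all `n`. -/
theorem stmt16 (α : ℝ) (hα : α ∈ Set.Icc (0 : ℝ) 1) :
    (∃ n : ℕ, ∃ b c : ℕ → ℕ,
      ((∀ k : ℕ, 1 ≤ k → k ≤ n → 2 ≤ b k ∧ 1 ≤ c k) ∧ α ∈ Aset b c n ∧
        α = cf (listOf b n) + cf (listOf c n)) ∧
      (∀ n' : ℕ, ∀ b' c' : ℕ → ℕ,
        ((∀ k : ℕ, 1 ≤ k → k ≤ n' → 2 ≤ b' k ∧ 1 ≤ c' k) ∧ α ∈ Aset b' c' n' ∧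
          α = cf (listOf b' n') + cf (listOf c' n')) →
        n' = n ∧ ∀ k : ℕ, 1 ≤ k → k ≤ n → b' k = b k ∧ c' k = c k)) ∨
    (∃ b c : ℕ → ℕ,
      ((∀ k : ℕ, 1 ≤ k → 2 ≤ b k ∧ 1 ≤ c k) ∧ ∀ n : ℕ, α ∈ Aset b c n) ∧
      (∀ b' c' : ℕ → ℕ,
        ((∀ k : ℕ, 1 ≤ k → 2 ≤ b' k ∧ 1 ≤ c' k) ∧ ∀ n : ℕ, α ∈ Aset b' c' n) →
        ∀ k : ℕ, 1 ≤ k → b' k = b k ∧ c' k = c k)) := by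
  classical
  obtain ⟨hα0, hα1⟩ := hα
  by_cases hterm : ∃ j, (sts α j).D = 0
  · left
    obtain ⟨n, hfind, hlt⟩ : ∃ n, (sts α n).D = 0 ∧ ∀ j, j < n → (sts α j).D ≠ 0 :=
      ⟨Nat.find hterm, Nat.find_spec hterm, fun j hj => Nat.find_min hterm hj⟩
    obtain ⟨_, _, _, _, hDk, _, _, _, _, _, hdig, hmem⟩ := invariant α hα0 hα1 n hlt
    have hsum : α = cf (listOf (bdig α) n) + cf (listOf (cdig α) n) := by
      have hε : ((-1:ℝ))^n ≠ 0 := pow_ne_zero _ (by norm_num)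
      rw [hfind] at hDk
      rcases mul_eq_zero.mp hDk.symm with h | h
      · exact absurd h hε
      · linarith
    have hA : α ∈ Aset (bdig α) (cdig α) n := by
      cases n with
      | zero => exact Set.mem_Icc.mpr ⟨hα0, hα1⟩
      | succ m => exact (mem_Aset_succ_iff _ _ m α).mpr hmem
    refine ⟨n, bdig α, cdig α, ⟨hdig, hA, hsum⟩, ?_⟩
    rintro n' b' c' ⟨hvd', hA', hsum'⟩
    have hmem' : ∀ j, 1 ≤ j → j ≤ n' → α ∈ Bset b' c' j ∧ α ∈ Cset b' c' j :=
      mem_Aset_elim hA'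
    have hnn : n' = n := by
      by_contra hne
      rcases Nat.lt_or_ge n' n with h | h
      · have hagree : ∀ j, 1 ≤ j → j ≤ n' → bdig α j = b' j ∧ cdig α j = c' j :=
          digits_unique (fun j a hb => hdig j a (by omega)) hvd'
            (fun j a hb => hmem j a (by omega)) hmem'
        have hsum2 : α = cf (listOf (bdig α) n') + cf (listOf (cdig α) n') := by
          rw [listOf_congr (fun j a hb => (hagree j a hb).1),
              listOf_congr (fun j a hb => (hagree j a hb).2)]
          exact hsum'
        exact (not_terminal (fun j a hb => by have := (hdig j a (by omega)).1; omega)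
          (hdig (n'+1) (by omega) (by omega)).1
          (hmem (n'+1) (by omega) (by omega)).1 hsum2).elim
      · have h' : n < n' := by omega
        have hagree : ∀ j, 1 ≤ j → j ≤ n → bdig α j = b' j ∧ cdig α j = c' j :=
          digits_unique hdig (fun j a hb => hvd' j a (by omega)) hmem
            (fun j a hb => hmem' j a (by omega))
        have hsum2 : α = cf (listOf b' n) + cf (listOf c' n) := by
          rw [← listOf_congr (fun j a hb => (hagree j a hb).1),
              ← listOf_congr (fun j a hb => (hagree j a hb).2)]
          exact hsum
        exact (not_terminal (fun j a hb => by have := (hvd' j a (by omega)).1; omega)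
          (hvd' (n+1) (by omega) (by omega)).1
          (hmem' (n+1) (by omega) (by omega)).1 hsum2).elim
    subst hnn
    refine ⟨rfl, fun k h1 h2 => ?_⟩
    have := digits_unique hdig hvd' hmem hmem' k h1 h2
    exact ⟨this.1.symm, this.2.symm⟩
  · right
    push_neg at hterm
    have hInv : ∀ k, Inv α k := fun k => invariant α hα0 hα1 k (fun j _ => hterm j)
    refine ⟨bdig α, cdig α, ⟨fun k hk => ?_, fun n => ?_⟩, ?_⟩
    · obtain ⟨_,_,_,_,_,_,_,_,_,_,hdig,_⟩ := hInv k
      exact hdig k hk le_rfl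
    · cases n with
      | zero => exact Set.mem_Icc.mpr ⟨hα0, hα1⟩
      | succ m =>
          obtain ⟨_,_,_,_,_,_,_,_,_,_,_,hmem⟩ := hInv (m+1)
          exact (mem_Aset_succ_iff _ _ m α).mpr hmem
    · rintro b' c' ⟨hvd', hA'⟩ k hk
      obtain ⟨_,_,_,_,_,_,_,_,_,_,hdig,hmem⟩ := hInv k
      have hmem' := mem_Aset_elim (hA' k)
      have := digits_unique hdig (fun j a _ => hvd' j a) hmem hmem' k hk le_rfl
      exact ⟨this.1.symm, this.2.symm⟩

end ShulgaPaper
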